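/- Two quantum operations E and F from B(H_d) to B(H_d') with Choi-Kraus operators {E_j} and {F_k} can be perfectly distinguished by a single use with an entangled input state |φ⟩ = (I⊗X)|Ψ⟩ (where |Ψ⟩ = Σ_i |i⟩|i⟩ and Tr(X†X)=1) if and only if the density operator XX† is orthogonal (in Hilbert-Schmidt inner product) to every operator E_j†F_k. -/

import Mathlib

open Matrix Kronecker

lemma aux1 {m n : Type*} [Fintype m] [Fintype n] (A : Matrix m n ℂ) (φ : n → ℂ) :
    A * Matrix.vecMulVec φ (star φ) * Aᴴ
      = Matrix.vecMulVec (A *ᵥ φ) (star (A *ᵥ φ)) := by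
  ext i j
  simp only [mul_apply, vecMulVec_apply, mulVec, dotProduct, conjTranspose_apply,
    Pi.star_apply, star_sum, star_mul', Finset.sum_mul, Finset.mul_sum]
  refine Finset.sum_congr rfl fun a _ => Finset.sum_congr rfl fun b _ => ?_
  ring

lemma aux2 {m : Type*} [Fintype m] (u v : m → ℂ) :
    Matrix.trace (Matrix.vecMulVec u (star u) * Matrix.vecMulVec v (star v))
      = (star u ⬝ᵥ v) * star (star u ⬝ᵥ v) := by
  simp only [trace, diag_apply, mul_apply, vecMulVec_apply, dotProduct, Pi.star_apply,
    star_sum, star_mul', star_star, Finset.sum_mul, Finset.mul_sum]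
  refine Finset.sum_congr rfl fun a _ => Finset.sum_congr rfl fun b _ => ?_
  ring

lemma aux3 {d d' : ℕ} (M : Matrix (Fin d') (Fin d) ℂ) (X : Matrix (Fin d) (Fin d) ℂ) :
    ((1 : Matrix (Fin d) (Fin d) ℂ) ⊗ₖ M) *ᵥ (fun p => X p.2 p.1)
      = fun p => (M * X) p.2 p.1 := by
  funext p
  simp [mulVec, dotProduct, Fintype.sum_prod_type, kroneckerMap_apply, one_apply,
    ite_mul, mul_apply]

lemma aux4 {d d' : ℕ} (Y Z : Matrix (Fin d') (Fin d) ℂ) :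
    star (fun p : Fin d × Fin d' => Y p.2 p.1) ⬝ᵥ (fun p => Z p.2 p.1)
      = (Yᴴ * Z).trace := by
  simp only [dotProduct, Fintype.sum_prod_type, trace, diag_apply, mul_apply,
    conjTranspose_apply, Pi.star_apply]
  try rw [Finset.sum_comm]

theorem single_use_distinguishability {d d' n0 n1 : ℕ}
    (E : Fin n0 → Matrix (Fin d') (Fin d) ℂ)
    (F : Fin n1 → Matrix (Fin d') (Fin d) ℂ)
    (hE : ∑ j, (E j)ᴴ * E j = 1) (hF : ∑ k, (F k)ᴴ * F k = 1)
    (X : Matrix (Fin d) (Fin d) ℂ) (hX : (Xᴴ * X).trace = 1)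
    (φ : Fin d × Fin d → ℂ) (hφ : φ = fun p => X p.2 p.1) :
    Matrix.trace
      ((∑ j, ((1 : Matrix (Fin d) (Fin d) ℂ) ⊗ₖ E j) * Matrix.vecMulVec φ (star φ) *
          ((1 : Matrix (Fin d) (Fin d) ℂ) ⊗ₖ E j)ᴴ) *
        (∑ k, ((1 : Matrix (Fin d) (Fin d) ℂ) ⊗ₖ F k) * Matrix.vecMulVec φ (star φ) *
          ((1 : Matrix (Fin d) (Fin d) ℂ) ⊗ₖ F k)ᴴ)) = 0
    ↔ ∀ j k, (((E j)ᴴ * F k)ᴴ * (X * Xᴴ)).trace = 0 := by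
  subst hφ
  -- the inner products
  set s : Fin n0 → Fin n1 → ℂ := fun j k =>
    star (((1 : Matrix (Fin d) (Fin d) ℂ) ⊗ₖ E j) *ᵥ fun p => X p.2 p.1) ⬝ᵥ
      (((1 : Matrix (Fin d) (Fin d) ℂ) ⊗ₖ F k) *ᵥ fun p => X p.2 p.1) with hs
  have hsval : ∀ j k, s j k = ((E j * X)ᴴ * (F k * X)).trace := by
    intro j k
    rw [hs]
    simp only [aux3]
    exact aux4 _ _
  have hrhs : ∀ j k, (((E j)ᴴ * F k)ᴴ * (X * Xᴴ)).trace = star (s j k) := by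
    intro j k
    rw [hsval, ← Matrix.trace_conjTranspose]
    have h1 : ((E j * X)ᴴ * (F k * X))ᴴ = Xᴴ * ((F k)ᴴ * E j) * X := by
      simp [conjTranspose_mul, Matrix.mul_assoc]
    have h2 : (((E j)ᴴ * F k)ᴴ * (X * Xᴴ)).trace = (X * Xᴴ * ((F k)ᴴ * E j)).trace := by
      rw [conjTranspose_mul, conjTranspose_conjTranspose, Matrix.trace_mul_comm,
        Matrix.mul_assoc]
    rw [h1, Matrix.trace_mul_cycle, h2]
  have hlhs : Matrix.trace
      ((∑ j, ((1 : Matrix (Fin d) (Fin d) ℂ) ⊗ₖ E j) * Matrix.vecMulVec (fun p : Fin d × Fin d => X p.2 p.1) (star (fun p : Fin d × Fin d => X p.2 p.1)) *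
          ((1 : Matrix (Fin d) (Fin d) ℂ) ⊗ₖ E j)ᴴ) *
        (∑ k, ((1 : Matrix (Fin d) (Fin d) ℂ) ⊗ₖ F k) * Matrix.vecMulVec (fun p : Fin d × Fin d => X p.2 p.1) (star (fun p : Fin d × Fin d => X p.2 p.1)) *
          ((1 : Matrix (Fin d) (Fin d) ℂ) ⊗ₖ F k)ᴴ))
      = ∑ j, ∑ k, ((Complex.normSq (s j k) : ℝ) : ℂ) := by
    simp only [aux1]
    rw [Finset.sum_mul_sum]
    rw [Matrix.trace_sum]
    refine Finset.sum_congr rfl fun j _ => ?_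
    rw [Matrix.trace_sum]
    refine Finset.sum_congr rfl fun k _ => ?_
    rw [aux2]
    show s j k * star (s j k) = _
    rw [Complex.star_def, Complex.mul_conj]
  rw [hlhs]
  have : (∑ j, ∑ k, ((Complex.normSq (s j k) : ℝ) : ℂ))
      = (((∑ j, ∑ k, Complex.normSq (s j k)) : ℝ) : ℂ) := by push_cast; ring
  rw [this, Complex.ofReal_eq_zero]
  rw [Finset.sum_eq_zero_iff_of_nonneg (fun j _ => Finset.sum_nonneg fun k _ => Complex.normSq_nonneg _)]
  constructor
  · intro h j k
    rw [hrhs, star_eq_zero]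
    have := h j (Finset.mem_univ j)
    rw [Finset.sum_eq_zero_iff_of_nonneg (fun k _ => Complex.normSq_nonneg _)] at this
    exact Complex.normSq_eq_zero.mp (this k (Finset.mem_univ k))
  · intro h j _
    refine Finset.sum_eq_zero fun k _ => ?_
    have := h j k
    rw [hrhs, star_eq_zero] at this
    simp [this]
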